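/- Let $c_1, \dots, c_s$ be real numbers and $P(\xi) = \prod_{i=1}^{s}(\xi - c_i)$. Suppose $\int_0^1 \xi^k P(\xi)\, d\xi = 0$ for $k = 0, 1, 2$. Then the condition $\int_0^1 \int_0^{1+x} \int_0^t P(\xi)\, d\xi\, dt\, dx = 0$ holds if and only if $\int_1^2 (\xi - 2)^2 P(\xi)\, d\xi = 0$. -/

import Mathlib

open intervalIntegral

theorem stmt_5 (s : ℕ) (c : Fin s → ℝ) (P : ℝ → ℝ)
    (hP : ∀ ξ, P ξ = ∏ i, (ξ - c i))
    (hmom : ∀ k : ℕ, k ≤ 2 → (∫ ξ in (0:ℝ)..1, ξ ^ k * P ξ) = 0) :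
    (∫ x in (0:ℝ)..1, ∫ t in (0:ℝ)..(1 + x), ∫ ξ in (0:ℝ)..t, P ξ) = 0
      ↔ (∫ ξ in (1:ℝ)..2, (ξ - 2) ^ 2 * P ξ) = 0 := by
  have hPc : Continuous P := by
    have : P = fun ξ => ∏ i, (ξ - c i) := funext hP
    rw [this]
    exact continuous_finset_prod _ fun i _ => continuous_id.sub continuous_const
  set Q : ℝ → ℝ := fun x => ∫ t in (0:ℝ)..x, P t with hQdef
  have hQd : ∀ x : ℝ, HasDerivAt Q (P x) x := fun x =>
    (hPc.integral_hasStrictDerivAt 0 x).hasDerivAt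
  have hQc : Continuous Q :=
    continuous_iff_continuousAt.2 fun x => (hQd x).continuousAt
  set F : ℝ → ℝ := fun x => ∫ t in (0:ℝ)..x, Q t with hFdef
  have hFd : ∀ x : ℝ, HasDerivAt F (Q x) x := fun x =>
    (hQc.integral_hasStrictDerivAt 0 x).hasDerivAt
  have hFc : Continuous F :=
    continuous_iff_continuousAt.2 fun x => (hFd x).continuousAt
  -- moments
  have hm0 : Q 1 = 0 := by
    have := hmom 0 (by norm_num)
    simpa [hQdef] using this
  have hm1 : (∫ ξ in (0:ℝ)..1, ξ * P ξ) = 0 := by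
    have := hmom 1 (by norm_num)
    simpa using this
  -- ∫₀¹ Q = 0, i.e. F 1 = 0
  have hF1 : F 1 = 0 := by
    have hibp : (∫ ξ in (0:ℝ)..1, ξ * P ξ)
        = 1 * Q 1 - 0 * Q 0 - ∫ ξ in (0:ℝ)..1, 1 * Q ξ := by
      exact integral_mul_deriv_eq_deriv_mul
        (fun x _ => hasDerivAt_id x) (fun x _ => hQd x)
        (continuous_const.intervalIntegrable _ _) (hPc.intervalIntegrable _ _)
    simp only [one_mul, zero_mul, sub_zero, hm0] at hibp
    rw [hm1] at hibp
    have : (∫ ξ in (0:ℝ)..1, Q ξ) = 0 := by linarith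
    simpa [hFdef] using this
  -- LHS = ∫₁² F
  have hLHS : (∫ x in (0:ℝ)..1, ∫ t in (0:ℝ)..(1 + x), ∫ ξ in (0:ℝ)..t, P ξ)
      = ∫ u in (1:ℝ)..2, F u := by
    have h1 : (∫ x in (0:ℝ)..1, ∫ t in (0:ℝ)..(1 + x), ∫ ξ in (0:ℝ)..t, P ξ)
        = ∫ x in (0:ℝ)..1, F (1 + x) := rfl
    rw [h1, integral_comp_add_left F 1]
    norm_num
  -- IBP 1: ∫₁² (ξ-2)² P = - Q 1 - ∫₁² 2(ξ-2) Q = - ∫₁² 2(ξ-2) Q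
  have hibp1 : (∫ ξ in (1:ℝ)..2, (ξ - 2) ^ 2 * P ξ)
      = ((2:ℝ) - 2) ^ 2 * Q 2 - (1 - 2) ^ 2 * Q 1
        - ∫ ξ in (1:ℝ)..2, (2 * (ξ - 2)) * Q ξ := by
    exact integral_mul_deriv_eq_deriv_mul
      (fun x _ => by
        simpa using (((hasDerivAt_id x).sub_const 2).fun_pow 2))
      (fun x _ => hQd x)
      (((continuous_const.mul (continuous_id.sub continuous_const))).intervalIntegrable _ _)
      (hPc.intervalIntegrable _ _)
  -- IBP 2: ∫₁² (ξ-2) Q = - ∫₁² F + F 1 ... compute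
  have hibp2 : (∫ ξ in (1:ℝ)..2, (ξ - 2) * Q ξ)
      = ((2:ℝ) - 2) * F 2 - (1 - 2) * F 1 - ∫ ξ in (1:ℝ)..2, 1 * F ξ := by
    exact integral_mul_deriv_eq_deriv_mul
      (fun x _ => by simpa using ((hasDerivAt_id x).sub_const 2))
      (fun x _ => hFd x)
      (continuous_const.intervalIntegrable _ _)
      (hQc.intervalIntegrable _ _)
  have hmul : (∫ ξ in (1:ℝ)..2, (2 * (ξ - 2)) * Q ξ)
      = 2 * ∫ ξ in (1:ℝ)..2, (ξ - 2) * Q ξ := by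
    rw [← intervalIntegral.integral_const_mul]
    congr 1; ext ξ; ring
  have key : (∫ ξ in (1:ℝ)..2, (ξ - 2) ^ 2 * P ξ) = 2 * ∫ u in (1:ℝ)..2, F u := by
    rw [hibp1, hmul, hibp2, hm0, hF1]
    simp only [one_mul]
    ring
  rw [hLHS, key]
  constructor <;> intro h <;> linarith
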